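/- Let (a_n) be the Thue–Morse sequence a_n = (-1)^{s_2(n)}. Then (∏_{n≥1} (2n/(2n+1))^{a_n} · ∏_{n≥1} (1 + a_n/(2n+1)))² = ∏_{n≥1} (2n/(2n+1))^{a_n} · (π/4) · (√2/2). Equivalently, ∏_{n≥1} (2n/(2n+1))^{a_n} · (∏_{n≥1}(1 + a_n/(2n+1)))² = π√2/8. -/

import Mathlib

open Real Finset Filter

/-- The ±1-valued Thue–Morse sequence as an integer: `a n = (-1)^(binary digit sum of n)`. -/
def thueMorseZ (n : ℕ) : ℤ := (-1) ^ (Nat.digits 2 n).sum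

lemma tm_two_mul (n : ℕ) : thueMorseZ (2 * n) = thueMorseZ n := by
  rcases Nat.eq_zero_or_pos n with h | h
  · simp [h]
  · unfold thueMorseZ
    rw [Nat.digits_def' (by norm_num : 1 < 2) (by omega)]
    simp [Nat.mul_div_cancel_left, Nat.mul_mod_right]

lemma tm_two_mul_add_one (n : ℕ) : thueMorseZ (2 * n + 1) = -thueMorseZ n := by
  unfold thueMorseZ
  rw [Nat.digits_def' (by norm_num : 1 < 2) (by omega)]
  have h1 : (2 * n + 1) % 2 = 1 := by omega
  have h2 : (2 * n + 1) / 2 = n := by omega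
  rw [h1, h2]
  simp [pow_succ, pow_add, mul_comm]

lemma tm_cases (n : ℕ) : thueMorseZ n = 1 ∨ thueMorseZ n = -1 := by
  unfold thueMorseZ
  rcases Nat.even_or_odd (Nat.digits 2 n).sum with h | h
  · left; exact h.neg_one_pow
  · right; exact h.neg_one_pow

lemma tm_one : thueMorseZ 1 = -1 := by
  have := tm_two_mul_add_one 0
  simpa [thueMorseZ] using this

noncomputable def PA (N : ℕ) : ℝ :=
  ∏ n ∈ Finset.range N, ((2 * ((n : ℝ) + 1)) / (2 * ((n : ℝ) + 1) + 1)) ^ (thueMorseZ (n + 1))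
noncomputable def PE (N : ℕ) : ℝ :=
  ∏ n ∈ Finset.range N, ((2 * ((n : ℝ) + 1) + 2) / (2 * ((n : ℝ) + 1) + 1)) ^ (thueMorseZ (n + 1))
noncomputable def PB (N : ℕ) : ℝ :=
  ∏ n ∈ Finset.range N, (1 + (thueMorseZ (n + 1) : ℝ) / (2 * ((n : ℝ) + 1) + 1))
noncomputable def PT (N : ℕ) : ℝ :=
  ∏ n ∈ Finset.range N, (((n : ℝ) + 1) / ((n : ℝ) + 2)) ^ (thueMorseZ (n + 1))
noncomputable def PL (N : ℕ) : ℝ :=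
  ∏ n ∈ Finset.range N, (2 * ((n : ℝ) + 1)) * (2 * ((n : ℝ) + 1) + 2) / (2 * ((n : ℝ) + 1) + 1) ^ 2

lemma PA_pos (N : ℕ) : 0 < PA N := by
  apply Finset.prod_pos
  intro n _
  apply zpow_pos
  positivity

lemma PE_pos (N : ℕ) : 0 < PE N := by
  apply Finset.prod_pos
  intro n _
  apply zpow_pos
  positivity

lemma PB_pos (N : ℕ) : 0 < PB N := by
  apply Finset.prod_pos
  intro n _
  rcases tm_cases (n + 1) with h | h <;> rw [h]
  · positivity
  · push_cast
    have h1 : (0:ℝ) < 2 * ((n : ℝ) + 1) + 1 := by positivity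
    have h2 : (1:ℝ) / (2 * ((n : ℝ) + 1) + 1) < 1 := by
      rw [div_lt_one h1]; linarith
    have : (-1 : ℝ) / (2 * ((n : ℝ) + 1) + 1) = -(1 / (2 * ((n : ℝ) + 1) + 1)) := by ring
    rw [this]
    linarith

lemma PT_eq (N : ℕ) : PT N = PA N / PE N := by
  rw [PT, PA, PE, ← Finset.prod_div_distrib]
  apply Finset.prod_congr rfl
  intro n _
  rw [← div_zpow]
  congr 1
  have h1 : (2 * ((n : ℝ) + 1) + 1) ≠ 0 := by positivity
  have h2 : (2 * ((n : ℝ) + 1) + 2) ≠ 0 := by positivity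
  have h3 : ((n : ℝ) + 2) ≠ 0 := by positivity
  field_simp
  ring

lemma PA_succ (m : ℕ) : PA (m + 1) =
    PA m * ((2 * ((m : ℝ) + 1)) / (2 * ((m : ℝ) + 1) + 1)) ^ thueMorseZ (m + 1) :=
  Finset.prod_range_succ _ _

lemma PE_succ (m : ℕ) : PE (m + 1) =
    PE m * ((2 * ((m : ℝ) + 1) + 2) / (2 * ((m : ℝ) + 1) + 1)) ^ thueMorseZ (m + 1) :=
  Finset.prod_range_succ _ _

lemma PT_succ (m : ℕ) : PT (m + 1) =
    PT m * (((m : ℝ) + 1) / ((m : ℝ) + 2)) ^ thueMorseZ (m + 1) :=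
  Finset.prod_range_succ _ _

lemma PT_doubling (N : ℕ) : PT (2 * N + 1) = 2 * PA N * PE N := by
  induction N with
  | zero =>
    simp only [PT, PA, PE, Finset.range_one, Finset.prod_singleton, Finset.range_zero,
      Finset.prod_empty]
    norm_num [tm_one]
  | succ m ih =>
    have h : 2 * (m + 1) + 1 = (2 * m + 1) + 1 + 1 := by ring
    rw [h, PT_succ, PT_succ, ih, PA_succ, PE_succ]
    have e1 : thueMorseZ (2 * m + 1 + 1) = thueMorseZ (m + 1) := by
      rw [show 2 * m + 1 + 1 = 2 * (m + 1) by ring, tm_two_mul]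
    have e2 : thueMorseZ (2 * m + 1 + 1 + 1) = -thueMorseZ (m + 1) := by
      rw [show 2 * m + 1 + 1 + 1 = 2 * (m + 1) + 1 by ring, tm_two_mul_add_one]
    rw [e1, e2, zpow_neg, ← inv_zpow, inv_div]
    push_cast
    ring

lemma PAB_identity (N : ℕ) : PA N * PB N ^ 2 = PL N * PE N := by
  rw [PA, PB, PE, PL, ← Finset.prod_pow, ← Finset.prod_mul_distrib, ← Finset.prod_mul_distrib]
  apply Finset.prod_congr rfl
  intro n _
  have h1 : (0:ℝ) < 2 * ((n : ℝ) + 1) + 1 := by positivity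
  have h2 : (0:ℝ) < 2 * ((n : ℝ) + 1) := by positivity
  rcases tm_cases (n + 1) with h | h <;> rw [h] <;> push_cast
  · rw [zpow_one, zpow_one]
    field_simp
    ring
  · rw [zpow_neg, zpow_one, zpow_neg, zpow_one]
    rw [inv_div, inv_div]
    field_simp
    ring

lemma PL_eq (N : ℕ) : PL N =
    (∏ i ∈ Finset.range N, ((2 : ℝ) * i + 2) / (2 * i + 1) * ((2 * i + 2) / (2 * i + 3))) *
      (((N : ℝ) + 1) / (2 * N + 1)) := by
  induction N with
  | zero => simp [PL]
  | succ m ih =>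
    have hstep : PL (m + 1) = PL m *
        ((2 * ((m : ℝ) + 1)) * (2 * ((m : ℝ) + 1) + 2) / (2 * ((m : ℝ) + 1) + 1) ^ 2) :=
      Finset.prod_range_succ _ _
    rw [hstep, ih, Finset.prod_range_succ]
    push_cast
    have d1 : (2 * (m:ℝ) + 1) ≠ 0 := by positivity
    have d2 : (2 * (m:ℝ) + 3) ≠ 0 := by positivity
    have d3 : (2 * ((m:ℝ) + 1) + 1) ≠ 0 := by positivity
    field_simp
    ring


lemma tendsto_two_mul_atTop : Tendsto (fun M : ℕ => 2 * M) atTop atTop := by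
  apply tendsto_atTop_atTop_of_monotone
  · intro a b h; simp only []; omega
  · intro b; exact ⟨b, by omega⟩

lemma tendsto_sum_of_pairs (g : ℕ → ℝ) (hg : Tendsto g atTop (nhds 0))
    (hs : Summable (fun k => g (2 * k) + g (2 * k + 1))) :
    ∃ l, Tendsto (fun N => ∑ n ∈ Finset.range N, g n) atTop (nhds l) := by
  set c := fun k => g (2 * k) + g (2 * k + 1) with hc
  set S := fun N => ∑ n ∈ Finset.range N, g n with hS
  have heven : ∀ M, S (2 * M) = ∑ k ∈ Finset.range M, c k := by
    intro M
    induction M with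
    | zero => simp [hS]
    | succ m ih =>
      have h : 2 * (m + 1) = 2 * m + 1 + 1 := by ring
      rw [h]
      simp only [hS, Finset.sum_range_succ] at *
      rw [ih]; ring
  refine ⟨∑' k, c k, ?_⟩
  have h1 : Tendsto (fun M => S (2 * M)) atTop (nhds (∑' k, c k)) := by
    simpa [heven] using hs.hasSum.tendsto_sum_nat
  have h2 : Tendsto (fun M => S (2 * M + 1)) atTop (nhds (∑' k, c k)) := by
    have he : ∀ M, S (2 * M + 1) = S (2 * M) + g (2 * M) := fun M =>
      Finset.sum_range_succ _ _
    have := h1.add (hg.comp tendsto_two_mul_atTop)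
    rw [add_zero] at this
    exact Tendsto.congr (fun M => (he M).symm) this
  rw [Metric.tendsto_atTop] at h1 h2 ⊢
  intro ε hε
  obtain ⟨M1, hM1⟩ := h1 ε hε
  obtain ⟨M2, hM2⟩ := h2 ε hε
  refine ⟨2 * (max M1 M2) + 2, fun N hN => ?_⟩
  rcases Nat.even_or_odd N with ⟨m, hm⟩ | ⟨m, hm⟩
  · have h : N = 2 * m := by omega
    rw [h]; exact hM1 m (by omega)
  · have h : N = 2 * m + 1 := by omega
    rw [h]; exact hM2 m (by omega)

lemma abs_log_sub_log_le {a b : ℝ} (ha : 0 < a) (hab : a ≤ b) :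
    |Real.log a - Real.log b| ≤ (b - a) / a := by
  have hb : 0 < b := lt_of_lt_of_le ha hab
  have h1 : Real.log a ≤ Real.log b := Real.log_le_log ha hab
  rw [abs_sub_comm, abs_of_nonneg (sub_nonneg.2 h1),
    ← Real.log_div (ne_of_gt hb) (ne_of_gt ha)]
  have h2 := Real.log_le_sub_one_of_pos (div_pos hb ha)
  have h3 : b / a - 1 = (b - a) / a := by field_simp
  linarith

noncomputable def gA (n : ℕ) : ℝ :=
  (thueMorseZ n : ℝ) * Real.log ((2 * (n : ℝ)) / (2 * (n : ℝ) + 1))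

noncomputable def gE (n : ℕ) : ℝ :=
  if n = 0 then 0 else (thueMorseZ n : ℝ) * Real.log ((2 * (n : ℝ) + 2) / (2 * (n : ℝ) + 1))

lemma gA_zero : gA 0 = 0 := by simp [gA]

lemma abs_tm (n : ℕ) : |(thueMorseZ n : ℝ)| = 1 := by
  rcases tm_cases n with h | h <;> simp [h]

lemma PA_eq_exp (N : ℕ) : PA N = Real.exp (∑ n ∈ Finset.range N, gA (n + 1)) := by
  rw [PA, Real.exp_sum]
  apply Finset.prod_congr rfl
  intro n _
  rw [gA]
  push_cast
  rw [mul_comm ((thueMorseZ (n + 1) : ℤ) : ℝ), ← Real.rpow_def_of_pos (by positivity), Real.rpow_intCast]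

lemma PE_eq_exp (N : ℕ) : PE N = Real.exp (∑ n ∈ Finset.range N, gE (n + 1)) := by
  rw [PE, Real.exp_sum]
  apply Finset.prod_congr rfl
  intro n _
  rw [gE, if_neg (Nat.succ_ne_zero n)]
  push_cast
  rw [mul_comm ((thueMorseZ (n + 1) : ℤ) : ℝ), ← Real.rpow_def_of_pos (by positivity), Real.rpow_intCast]

lemma abs_log_div_le {a b : ℝ} (ha : 0 < a) (hab : a ≤ b) : |Real.log (a / b)| ≤ (b - a) / a := by
  rw [Real.log_div (ne_of_gt ha) (ne_of_gt (lt_of_lt_of_le ha hab))]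
  exact abs_log_sub_log_le ha hab

lemma gA_tendsto_zero : Tendsto gA atTop (nhds 0) := by
  apply squeeze_zero_norm (a := fun n : ℕ => 2 / ((n : ℝ) + 1))
  · intro n
    match n with
    | 0 => simp [gA_zero]
    | (m + 1) =>
      have h2 : (0:ℝ) < 2 * ((m + 1 : ℕ) : ℝ) := by positivity
      have key := abs_log_div_le (a := 2 * ((m + 1 : ℕ) : ℝ)) (b := 2 * ((m + 1 : ℕ) : ℝ) + 1)
        h2 (by linarith)
      rw [gA, Real.norm_eq_abs, abs_mul, abs_tm, one_mul]
      refine key.trans ?_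
      push_cast
      rw [div_le_div_iff₀ (by positivity) (by positivity)]
      ring_nf
      nlinarith [Nat.cast_nonneg (α := ℝ) m]
  · have := tendsto_one_div_add_atTop_nhds_zero_nat (𝕜 := ℝ)
    have h2 := this.const_mul (2 : ℝ)
    rw [mul_zero] at h2
    refine h2.congr fun n => by ring

lemma abs_log_div_le' {a b : ℝ} (ha : 0 < a) (hab : a ≤ b) : |Real.log (b / a)| ≤ (b - a) / a := by
  have hb : 0 < b := lt_of_lt_of_le ha hab
  rw [Real.log_div (ne_of_gt hb) (ne_of_gt ha), abs_sub_comm]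
  exact abs_log_sub_log_le ha hab

lemma gE_tendsto_zero : Tendsto gE atTop (nhds 0) := by
  apply squeeze_zero_norm (a := fun n : ℕ => 2 / ((n : ℝ) + 1))
  · intro n
    match n with
    | 0 => simp [gE]
    | (m + 1) =>
      have h2 : (0:ℝ) < 2 * ((m + 1 : ℕ) : ℝ) + 1 := by positivity
      have key := abs_log_div_le' (a := 2 * ((m + 1 : ℕ) : ℝ) + 1) (b := 2 * ((m + 1 : ℕ) : ℝ) + 2)
        h2 (by linarith)
      rw [gE, if_neg (Nat.succ_ne_zero m), Real.norm_eq_abs, abs_mul, abs_tm, one_mul]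
      refine key.trans ?_
      push_cast
      rw [div_le_div_iff₀ (by positivity) (by positivity)]
      ring_nf
      nlinarith [Nat.cast_nonneg (α := ℝ) m]
  · have := tendsto_one_div_add_atTop_nhds_zero_nat (𝕜 := ℝ)
    have h2 := this.const_mul (2 : ℝ)
    rw [mul_zero] at h2
    refine h2.congr fun n => by ring

lemma summable_aux : Summable (fun k : ℕ => 1 / (8 * ((k : ℝ) + 1) ^ 2)) := by
  have h1 : Summable (fun n : ℕ => 1 / ((n : ℝ)) ^ 2) :=
    Real.summable_one_div_nat_pow.mpr (by norm_num)
  have h2 := (summable_nat_add_iff 1).mpr h1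
  have h3 := h2.mul_left (1 / 8 : ℝ)
  refine h3.congr fun k => ?_
  push_cast
  have : ((k : ℝ) + 1) ≠ 0 := by positivity
  field_simp

lemma summable_cA : Summable (fun k => gA (2 * k) + gA (2 * k + 1)) := by
  rw [← summable_nat_add_iff 1]
  refine Summable.of_norm_bounded summable_aux ?_
  intro k
  set y : ℝ := (k : ℝ) + 1 with hy
  have hy1 : (1:ℝ) ≤ y := by simp [hy]
  have hy0 : (0:ℝ) < y := by linarith
  have e1 : gA (2 * (k + 1)) =
      (thueMorseZ (k + 1) : ℝ) * Real.log ((4 * y) / (4 * y + 1)) := by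
    rw [gA, tm_two_mul, hy]
    push_cast
    ring_nf
  have e2 : gA (2 * (k + 1) + 1) =
      -((thueMorseZ (k + 1) : ℝ)) * Real.log ((4 * y + 2) / (4 * y + 3)) := by
    rw [gA, tm_two_mul_add_one, hy]
    push_cast
    ring_nf
  rw [e1, e2]
  have e3 : (thueMorseZ (k + 1) : ℝ) * Real.log ((4 * y) / (4 * y + 1)) +
      -((thueMorseZ (k + 1) : ℝ)) * Real.log ((4 * y + 2) / (4 * y + 3)) =
      (thueMorseZ (k + 1) : ℝ) *
        (Real.log ((4 * y) / (4 * y + 1)) - Real.log ((4 * y + 2) / (4 * y + 3))) := by ring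
  rw [e3, Real.norm_eq_abs, abs_mul, abs_tm, one_mul]
  have ha : (0:ℝ) < (4 * y) / (4 * y + 1) := by positivity
  have hab : (4 * y) / (4 * y + 1) ≤ (4 * y + 2) / (4 * y + 3) := by
    rw [div_le_div_iff₀ (by positivity) (by positivity)]
    nlinarith
  refine (abs_log_sub_log_le ha hab).trans ?_
  have hba : ((4 * y + 2) / (4 * y + 3) - (4 * y) / (4 * y + 1)) / ((4 * y) / (4 * y + 1)) =
      2 / ((4 * y) * (4 * y + 3)) := by
    field_simp
    ring
  rw [hba, div_le_div_iff₀ (by positivity) (by positivity)]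
  nlinarith

lemma summable_cE : Summable (fun k => gE (2 * k) + gE (2 * k + 1)) := by
  rw [← summable_nat_add_iff 1]
  refine Summable.of_norm_bounded summable_aux ?_
  intro k
  set y : ℝ := (k : ℝ) + 1 with hy
  have hy1 : (1:ℝ) ≤ y := by simp [hy]
  have hy0 : (0:ℝ) < y := by linarith
  have e1 : gE (2 * (k + 1)) =
      (thueMorseZ (k + 1) : ℝ) * Real.log ((4 * y + 2) / (4 * y + 1)) := by
    rw [gE, if_neg (by omega), tm_two_mul, hy]
    push_cast
    ring_nf
  have e2 : gE (2 * (k + 1) + 1) =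
      -((thueMorseZ (k + 1) : ℝ)) * Real.log ((4 * y + 4) / (4 * y + 3)) := by
    rw [gE, if_neg (by omega), tm_two_mul_add_one, hy]
    push_cast
    ring_nf
  rw [e1, e2]
  have e3 : (thueMorseZ (k + 1) : ℝ) * Real.log ((4 * y + 2) / (4 * y + 1)) +
      -((thueMorseZ (k + 1) : ℝ)) * Real.log ((4 * y + 4) / (4 * y + 3)) =
      -((thueMorseZ (k + 1) : ℝ) *
        (Real.log ((4 * y + 4) / (4 * y + 3)) - Real.log ((4 * y + 2) / (4 * y + 1)))) := by ring
  rw [e3, Real.norm_eq_abs, abs_neg, abs_mul, abs_tm, one_mul]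
  have ha : (0:ℝ) < (4 * y + 4) / (4 * y + 3) := by positivity
  have hab : (4 * y + 4) / (4 * y + 3) ≤ (4 * y + 2) / (4 * y + 1) := by
    rw [div_le_div_iff₀ (by positivity) (by positivity)]
    nlinarith
  refine (abs_log_sub_log_le ha hab).trans ?_
  have hba : ((4 * y + 2) / (4 * y + 1) - (4 * y + 4) / (4 * y + 3)) / ((4 * y + 4) / (4 * y + 3)) =
      2 / ((4 * y + 1) * (4 * y + 4)) := by
    field_simp
    ring
  rw [hba, div_le_div_iff₀ (by positivity) (by positivity)]
  nlinarith

lemma gE_zero : gE 0 = 0 := by simp [gE]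

lemma sum_shift (g : ℕ → ℝ) (h0 : g 0 = 0) (N : ℕ) :
    ∑ n ∈ Finset.range N, g (n + 1) = ∑ n ∈ Finset.range (N + 1), g n := by
  rw [Finset.sum_range_succ']
  simp [h0]

lemma tendsto_odd_atTop : Tendsto (fun N : ℕ => 2 * N + 1) atTop atTop := by
  apply tendsto_atTop_atTop_of_monotone
  · intro a b h; simp only []; omega
  · intro b; exact ⟨b, by omega⟩

theorem woods_robbins_combination :
    ∃ A B : ℝ,
      Filter.Tendsto
        (fun N => ∏ n ∈ Finset.range N,
          ((2 * ((n : ℝ) + 1)) / (2 * ((n : ℝ) + 1) + 1)) ^ (thueMorseZ (n + 1)))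
        Filter.atTop (nhds A) ∧
      Filter.Tendsto
        (fun N => ∏ n ∈ Finset.range N,
          (1 + (thueMorseZ (n + 1) : ℝ) / (2 * ((n : ℝ) + 1) + 1)))
        Filter.atTop (nhds B) ∧
      A * B ^ 2 = Real.pi * Real.sqrt 2 / 8 := by
  obtain ⟨lA, hlA⟩ := tendsto_sum_of_pairs gA gA_tendsto_zero summable_cA
  obtain ⟨lE, hlE⟩ := tendsto_sum_of_pairs gE gE_tendsto_zero summable_cE
  set A := Real.exp lA with hAdef
  set E := Real.exp lE with hEdef
  have hA0 : (0:ℝ) < A := Real.exp_pos lA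
  have hE0 : (0:ℝ) < E := Real.exp_pos lE
  have hPA : Tendsto PA atTop (nhds A) := by
    have h := hlA.comp (tendsto_add_atTop_nat 1)
    have h2 := (Real.continuous_exp.tendsto lA).comp h
    refine h2.congr fun N => ?_
    rw [Function.comp_apply, Function.comp_apply, PA_eq_exp, sum_shift gA gA_zero]
  have hPE : Tendsto PE atTop (nhds E) := by
    have h := hlE.comp (tendsto_add_atTop_nat 1)
    have h2 := (Real.continuous_exp.tendsto lE).comp h
    refine h2.congr fun N => ?_
    rw [Function.comp_apply, Function.comp_apply, PE_eq_exp, sum_shift gE gE_zero]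
  have hPT : Tendsto PT atTop (nhds (A / E)) :=
    (hPA.div hPE (ne_of_gt hE0)).congr fun N => (PT_eq N).symm
  have hu : Tendsto (fun N => PT (2 * N + 1)) atTop (nhds (A / E)) := hPT.comp tendsto_odd_atTop
  have hv : Tendsto (fun N => PT (2 * N + 1)) atTop (nhds (2 * A * E)) := by
    have := (hPA.const_mul 2).mul hPE
    exact (this.congr fun N => (PT_doubling N).symm)
  have key : A / E = 2 * A * E := tendsto_nhds_unique hu hv
  have hE2 : E ^ 2 = 1 / 2 := by
    have hA' : A ≠ 0 := ne_of_gt hA0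
    have hE' : E ≠ 0 := ne_of_gt hE0
    field_simp at key
    -- key : A = 2 * A * E * E
    nlinarith [key, sq_nonneg E]
  have hEval : E = Real.sqrt 2 / 2 := by
    have hc : (Real.sqrt 2 / 2) ^ 2 = 1 / 2 := by
      rw [div_pow, Real.sq_sqrt (by norm_num : (0:ℝ) ≤ 2)]
      norm_num
    have h3 : (E - Real.sqrt 2 / 2) * (E + Real.sqrt 2 / 2) = 0 := by
      linear_combination hE2 - hc
    rcases mul_eq_zero.1 h3 with h | h
    · linarith [sub_eq_zero.1 h]
    · exfalso
      have := Real.sqrt_nonneg 2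
      nlinarith
  -- Wallis
  have hq : Tendsto (fun N : ℕ => ((N : ℝ) + 1) / (2 * (N : ℝ) + 1)) atTop (nhds (1 / 2)) := by
    have h1 : Tendsto (fun N : ℕ => 2 * (N : ℝ) + 1) atTop atTop :=
      tendsto_atTop_add_const_right _ 1
        (tendsto_natCast_atTop_atTop.const_mul_atTop (by norm_num))
    have h2 := h1.inv_tendsto_atTop
    have h3 := h2.const_mul (1 / 2 : ℝ)
    rw [mul_zero] at h3
    have h4 := (tendsto_const_nhds (x := (1 / 2 : ℝ)) (f := atTop)).add h3
    rw [add_zero] at h4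
    refine h4.congr fun N => ?_
    have hne : (2 * (N : ℝ) + 1) ≠ 0 := by positivity
    simp only [Pi.inv_apply]
    field_simp
    ring
  have hPL : Tendsto PL atTop (nhds (π / 4)) := by
    have h := Real.tendsto_prod_pi_div_two.mul hq
    rw [show π / 2 * (1 / 2) = π / 4 by ring] at h
    exact h.congr fun N => (PL_eq N).symm
  -- B
  have hBeq : ∀ N, PB N = Real.sqrt (PL N * PE N / PA N) := by
    intro N
    have h : PL N * PE N / PA N = PB N ^ 2 := by
      rw [← PAB_identity, mul_comm, mul_div_assoc, div_self (ne_of_gt (PA_pos N)), mul_one]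
    rw [h, Real.sqrt_sq (PB_pos N).le]
  have hPB : Tendsto PB atTop (nhds (Real.sqrt (π / 4 * E / A))) := by
    have h := ((hPL.mul hPE).div hPA (ne_of_gt hA0)).sqrt
    exact h.congr fun N => (hBeq N).symm
  refine ⟨A, Real.sqrt (π / 4 * E / A), hPA, hPB, ?_⟩
  have harg : (0:ℝ) ≤ π / 4 * E / A := by
    have := Real.pi_pos
    positivity
  rw [Real.sq_sqrt harg, hEval]
  field_simp
  ring
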